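/- Let (G,I,O) be an open graph admitting a causal flow, and suppose V ≠ O. Then there exists v ∈ O∖I whose neighborhood intersected with V∖O is a singleton {u}; equivalently, some output vertex can serve as the corrector of exactly one unmeasured vertex. -/

import Mathlib

open Set

variable {V : Type*}

def oddN (G : SimpleGraph V) (K : Set V) : Set V :=
  {u | Odd {v | v ∈ K ∧ G.Adj u v}.ncard}

def IsSPO (lt : V → V → Prop) : Prop :=
  (∀ a, ¬ lt a a) ∧ (∀ a b c, lt a b → lt b c → lt a c)

def IsCausalFlow (G : SimpleGraph V) (I O : Set V) (g : V → V) (lt : V → V → Prop) : Prop :=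
  IsSPO lt ∧ (∀ i, i ∉ O → g i ∉ I) ∧ (∀ i, i ∉ O → lt i (g i)) ∧
  (∀ i, i ∉ O → ∀ j, G.Adj (g i) j → j = i ∨ lt i j) ∧
  (∀ i, i ∉ O → G.Adj (g i) i)

def IsGFlow (G : SimpleGraph V) (I O : Set V) (g : V → Set V) (lt : V → V → Prop) : Prop :=
  IsSPO lt ∧ (∀ i, i ∉ O → (g i).Nonempty ∧ g i ∩ I = ∅) ∧
  (∀ i, i ∉ O → ∀ j ∈ g i, lt i j) ∧
  (∀ i, i ∉ O → ∀ j ∈ oddN G (g i), j = i ∨ lt i j) ∧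
  (∀ i, i ∉ O → i ∈ oddN G (g i))

def maxSet (lt : V → V → Prop) (X : Set V) : Set V :=
  {u ∈ X | ∀ v ∈ X, ¬ lt u v}

def rest (lt : V → V → Prop) : ℕ → Set V
  | 0 => Set.univ
  | k+1 => rest lt k \ maxSet lt (rest lt k)

def layer (lt : V → V → Prop) (k : ℕ) : Set V := maxSet lt (rest lt k)

def cumul (lt : V → V → Prop) (k : ℕ) : Set V := Set.univ \ rest lt (k+1)

def MoreDelayed (lt lt' : V → V → Prop) : Prop :=
  (∀ k, (cumul lt' k).ncard ≤ (cumul lt k).ncard) ∧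
  ∃ k, (cumul lt' k).ncard < (cumul lt k).ncard

noncomputable def flowDepth (lt : V → V → Prop) : ℕ := sInf {d | layer lt (d+1) = ∅}

def MaxDelayedCausalFlow (G : SimpleGraph V) (I O : Set V) (g : V → V) (lt : V → V → Prop) : Prop :=
  IsCausalFlow G I O g lt ∧
  ∀ g' lt', IsCausalFlow G I O g' lt' → ¬ MoreDelayed lt' lt

def MaxDelayedGFlow (G : SimpleGraph V) (I O : Set V) (g : V → Set V) (lt : V → V → Prop) : Prop :=
  IsGFlow G I O g lt ∧
  ∀ g' lt', IsGFlow G I O g' lt' → ¬ MoreDelayed lt' lt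

theorem causal_flow_correctable_vertex {V : Type*} [Fintype V] (G : SimpleGraph V)
    (I O : Set V) (h : ∃ (g : V → V) (lt : V → V → Prop), IsCausalFlow G I O g lt)
    (hVO : (Set.univ : Set V) ≠ O) :
    ∃ v ∈ O \ I, ∃ u, G.neighborSet v ∩ Oᶜ = {u} := by
  obtain ⟨g, lt, ⟨hirr, htrans⟩, hI, hlt, hadj, hn⟩ := h
  have hne : (Oᶜ : Set V).Nonempty := by
    obtain ⟨a, ha⟩ := Set.ne_univ_iff_exists_notMem O |>.mp (Ne.symm hVO)
    exact ⟨a, ha⟩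
  -- pick u ∈ Oᶜ minimizing the size of its strict upper set within Oᶜ
  obtain ⟨u, hu, hmin⟩ := Set.exists_min_image (Oᶜ : Set V)
    (fun u => {v | v ∉ O ∧ lt u v}.ncard) (Set.toFinite _) hne
  have hmax : ∀ w, w ∉ O → ¬ lt u w := by
    intro w hw hlw
    have hsub : {v | v ∉ O ∧ lt w v} ⊂ {v | v ∉ O ∧ lt u v} := by
      constructor
      · intro v ⟨hv1, hv2⟩; exact ⟨hv1, htrans _ _ _ hlw hv2⟩
      · intro hss
        exact hirr w (hss ⟨hw, hlw⟩).2
    have := Set.ncard_lt_ncard hsub (Set.toFinite _)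
    exact absurd (hmin w hw) (not_le.mpr this)
  have huO : u ∉ O := hu
  have hgO : g u ∈ O := by
    by_contra hg
    exact hmax (g u) hg (hlt u huO)
  refine ⟨g u, ⟨hgO, hI u huO⟩, u, ?_⟩
  ext j
  simp only [Set.mem_inter_iff, SimpleGraph.mem_neighborSet, Set.mem_compl_iff,
    Set.mem_singleton_iff]
  constructor
  · rintro ⟨hadjj, hjO⟩
    rcases hadj u huO j hadjj with heq | hl
    · exact heq
    · exact absurd hl (hmax j hjO)
  · rintro rfl
    exact ⟨hn _ huO, huO⟩
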